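/- If A and B are nonempty words and the powers A^{m1} and B^{m2} share a common prefix of length at least |A| + |B|, then there exists a word C and integers k, l such that A = C^k and B = C^l. -/
import Mathlib

/-- `wpow A n` is the `n`-fold concatenation `A^n` of the word `A`. -/
def wpow {α : Type*} (A : List α) : ℕ → List α
  | 0 => []
  | n + 1 => A ++ wpow A n

lemma wpow_add {α : Type*} (A : List α) (m n : ℕ) :
    wpow A (m + n) = wpow A m ++ wpow A n := by
  induction m with
  | zero => simp [wpow]
  | succ m ih => simp [wpow, Nat.succ_add, ih]

lemma wpow_length {α : Type*} (A : List α) (n : ℕ) :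
    (wpow A n).length = n * A.length := by
  induction n with
  | zero => simp [wpow]
  | succ n ih => simp [wpow, ih, Nat.succ_mul]; ring

lemma comm_pow {α : Type*} : ∀ (n : ℕ) (A B : List α), A.length + B.length ≤ n →
    A ++ B = B ++ A → ∃ (C : List α) (k l : ℕ), A = wpow C k ∧ B = wpow C l := by
  intro n
  induction n with
  | zero =>
    intro A B hlen _
    have hA : A = [] := List.length_eq_zero_iff.mp (by omega)
    have hB : B = [] := List.length_eq_zero_iff.mp (by omega)
    exact ⟨[], 0, 0, by simp [hA, wpow], by simp [hB, wpow]⟩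
  | succ n ih =>
    intro A B hlen hcomm
    rcases eq_or_ne A [] with rfl | hA
    · exact ⟨B, 0, 1, by simp [wpow], by simp [wpow]⟩
    rcases eq_or_ne B [] with rfl | hB
    · exact ⟨A, 1, 0, by simp [wpow], by simp [wpow]⟩
    have hA1 : 1 ≤ A.length := List.length_pos_iff.mpr hA
    have hB1 : 1 ≤ B.length := List.length_pos_iff.mpr hB
    rcases le_total A.length B.length with h | h
    · -- A is a prefix of B
      have htake : A = B.take A.length := by
        have := congrArg (List.take A.length) hcomm
        simpa [List.take_append_of_le_length h, List.take_left] using this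
      set B' := B.drop A.length with hB'
      have hBsplit : B = A ++ B' := by
        rw [htake, hB']; exact (List.take_append_drop _ _).symm
      have hcomm' : A ++ B' = B' ++ A := by
        have : A ++ (A ++ B') = (A ++ B') ++ A := by rw [← hBsplit]; exact hcomm
        have := this
        rw [List.append_assoc] at this
        exact List.append_cancel_left this
      have hlen' : A.length + B'.length ≤ n := by
        have : B'.length = B.length - A.length := by simp [hB']
        omega
      obtain ⟨C, k, l, hAC, hB'C⟩ := ih A B' hlen' hcomm'
      exact ⟨C, k, k + l, hAC, by rw [hBsplit, hAC, hB'C, ← wpow_add]⟩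
    · -- B is a prefix of A
      have htake : B = A.take B.length := by
        have := congrArg (List.take B.length) hcomm
        simpa [List.take_append_of_le_length h, List.take_left] using this.symm
      set A' := A.drop B.length with hA'
      have hAsplit : A = B ++ A' := by
        rw [htake, hA']; exact (List.take_append_drop _ _).symm
      have hcomm' : B ++ A' = A' ++ B := by
        have : B ++ (B ++ A') = (B ++ A') ++ B := by rw [← hAsplit]; exact hcomm.symm
        rw [List.append_assoc] at this
        exact List.append_cancel_left this
      have hlen' : A'.length + B.length ≤ n := by
        have : A'.length = A.length - B.length := by simp [hA']
        omega
      obtain ⟨C, k, l, hA'C, hBC⟩ := ih A' B hlen' hcomm'.symm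
      exact ⟨C, l + k, l, by rw [hAsplit, hBC, hA'C, ← wpow_add], hBC⟩

theorem stmt1 {α : Type*} (A B : List α) (hA : A ≠ []) (hB : B ≠ []) (m1 m2 : ℕ)
    (hlen1 : A.length + B.length ≤ (wpow A m1).length)
    (hlen2 : A.length + B.length ≤ (wpow B m2).length)
    (hpre : (wpow A m1).take (A.length + B.length) = (wpow B m2).take (A.length + B.length)) :
    ∃ (C : List α) (k l : ℕ), A = wpow C k ∧ B = wpow C l := by
  have hA1 : 1 ≤ A.length := List.length_pos_iff.mpr hA
  have hB1 : 1 ≤ B.length := List.length_pos_iff.mpr hB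
  rw [wpow_length] at hlen1 hlen2
  -- m1, m2 ≥ 1
  obtain ⟨m1', rfl⟩ : ∃ m, m1 = m + 1 := by
    cases m1 with
    | zero => rw [Nat.zero_mul] at hlen1; omega
    | succ m => exact ⟨m, rfl⟩
  obtain ⟨m2', rfl⟩ : ∃ m, m2 = m + 1 := by
    cases m2 with
    | zero => rw [Nat.zero_mul] at hlen2; omega
    | succ m => exact ⟨m, rfl⟩
  have hBlen : B.length ≤ (wpow A m1').length := by
    rw [wpow_length]; rw [Nat.succ_mul] at hlen1; omega
  have hAlen : A.length ≤ (wpow B m2').length := by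
    rw [wpow_length]; rw [Nat.succ_mul] at hlen2; omega
  -- take B.length of wpow A (m1'+1) using tail form
  have hsplitA : wpow A (m1' + 1) = A ++ wpow A m1' := rfl
  have hsplitA' : wpow A (m1' + 1) = wpow A m1' ++ A := by
    rw [wpow_add A m1' 1]; simp [wpow]
  have hsplitB : wpow B (m2' + 1) = B ++ wpow B m2' := rfl
  have hsplitB' : wpow B (m2' + 1) = wpow B m2' ++ B := by
    rw [wpow_add B m2' 1]; simp [wpow]
  have htakeA : (wpow A (m1' + 1)).take (A.length + B.length) = A ++ (wpow A m1').take B.length := by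
    rw [hsplitA, List.take_append]
    simp
  have htakeB : (wpow B (m2' + 1)).take (A.length + B.length) = B ++ (wpow B m2').take A.length := by
    rw [hsplitB, List.take_append]
    simp [Nat.add_comm]
  -- (wpow A m1').take B.length = B
  have h1 : (wpow A m1').take B.length = (wpow A (m1' + 1)).take B.length := by
    rw [hsplitA', List.take_append_of_le_length hBlen]
  have h2 : (wpow B m2').take A.length = (wpow B (m2' + 1)).take A.length := by
    rw [hsplitB', List.take_append_of_le_length hAlen]
  have h3 : (wpow A (m1' + 1)).take B.length = B := by
    have := congrArg (List.take B.length) hpre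
    rw [List.take_take, List.take_take] at this
    rw [Nat.min_eq_left (by omega)] at this
    rw [this, hsplitB, List.take_append_of_le_length le_rfl, List.take_length]
  have h4 : (wpow B (m2' + 1)).take A.length = A := by
    have := congrArg (List.take A.length) hpre
    rw [List.take_take, List.take_take] at this
    rw [Nat.min_eq_left (by omega)] at this
    rw [← this, hsplitA, List.take_append_of_le_length le_rfl, List.take_length]
  have hcomm : A ++ B = B ++ A := by
    have := hpre
    rw [htakeA, htakeB, h1, h2, h3, h4] at this
    exact this
  exact comm_pow (A.length + B.length) A B le_rfl hcomm
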